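/- Let n ≤ m be positive integers and let K be a simplicial complex on the set [m] = {1,…,m} all of whose members have at most n elements. Let f_{j−1} be the number of j-element members of K (f_{−1} = 1), let h_k = Σ_{i=0}^{k} (−1)^{k−i}·binom(n−i, k−i)·f_{i−1} for 0 ≤ k ≤ n, and for 0 ≤ p ≤ m set χ_p = Σ_{j=0}^{p} (−1)^{p−j}·f_{j−1}·binom(m−j, p−j). Then the following identity of polynomials in ℤ[t] holds: Σ_{p=0}^{m} (χ_p − (−1)^p·binom(m,p))·t^{2p} = (1 − t²)^{m−n}·(h_0 + h_1 t² + ⋯ + h_n t^{2n}) − (1 − t²)^m. -/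
import Mathlib
open Polynomial Finset

set_option maxRecDepth 4000

lemma expand17 (d : ℕ) : ((1 : ℤ[X]) - X^2)^d
    = ∑ q ∈ Finset.range (d+1), C ((-1:ℤ)^q * (d.choose q : ℤ)) * X^(2*q) := by
  rw [sub_eq_add_neg, add_comm, add_pow]
  refine Finset.sum_congr rfl fun q hq => ?_
  rw [one_pow, mul_one, neg_pow, pow_mul]
  simp only [map_mul, map_pow, map_neg, map_one, map_natCast]
  ring

lemma aux17 (N : ℕ) (f : ℕ → ℤ) :
    ∑ p ∈ Finset.range (N+1), (∑ j ∈ Finset.range (p+1),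
        C ((-1:ℤ)^(p-j) * f j * ((N-j).choose (p-j) : ℤ))) * X^(2*p)
    = ∑ j ∈ Finset.range (N+1), C (f j) * X^(2*j) * (1 - X^2)^(N-j) := by
  simp_rw [Finset.sum_mul, Finset.range_eq_Ico]
  rw [← Finset.sum_Ico_Ico_comm]
  refine Finset.sum_congr rfl fun j hj => ?_
  simp only [Finset.mem_Ico] at hj
  rw [Finset.sum_Ico_eq_sum_range, expand17]
  have hNj : N + 1 - j = (N - j) + 1 := by omega
  rw [hNj, Finset.mul_sum]
  refine Finset.sum_congr rfl fun q hq => ?_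
  have h1 : j + q - j = q := by omega
  rw [h1, show 2*(j+q) = 2*j + 2*q from by ring, pow_add]
  simp only [map_mul, map_pow, map_neg, map_one, map_natCast]
  ring

/-- Theorem (rgp): χ(Z_K, T^m; t) = (1−t²)^{m−n}(h₀ + h₁t² + ⋯ + hₙt^{2n}) − (1−t²)^m,
where χ_p(Z_K, T^m) = χ_p − (−1)^p·C(m,p). -/
theorem stmt17 (m n : ℕ) (hn : 1 ≤ n) (hnm : n ≤ m)
    (K : Finset (Finset (Fin m)))
    (hK : ∀ I ∈ K, ∀ J ⊆ I, J ∈ K) (hempty : ∅ ∈ K)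
    (hdim : ∀ I ∈ K, I.card ≤ n)
    (f : ℕ → ℤ)
    (hf : ∀ j, f j = ((K.filter (fun I => I.card = j)).card : ℤ))
    (h : ℕ → ℤ)
    (hh : ∀ k, h k = ∑ i ∈ Finset.range (k + 1),
      (-1 : ℤ) ^ (k - i) * (Nat.choose (n - i) (k - i) : ℤ) * f i)
    (χ : ℕ → ℤ)
    (hχ : ∀ p, χ p = ∑ j ∈ Finset.range (p + 1),
      (-1 : ℤ) ^ (p - j) * f j * (Nat.choose (m - j) (p - j) : ℤ)) :
    ∑ p ∈ Finset.range (m + 1),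
        C (χ p - (-1 : ℤ) ^ p * (Nat.choose m p : ℤ)) * X ^ (2 * p)
      = (1 - X ^ 2) ^ (m - n) *
          (∑ k ∈ Finset.range (n + 1), C (h k) * X ^ (2 * k))
        - (1 - X ^ 2) ^ m := by
  have hf0 : ∀ j, n < j → f j = 0 := by
    intro j hj
    rw [hf]
    norm_cast
    rw [Finset.card_eq_zero, Finset.filter_eq_empty_iff]
    intro I hI hcard
    exact absurd (hdim I hI) (by omega)
  have e0 : ∑ p ∈ Finset.range (m + 1),
        C (χ p - (-1 : ℤ) ^ p * (Nat.choose m p : ℤ)) * X ^ (2 * p)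
      = (∑ p ∈ Finset.range (m + 1), C (χ p) * X ^ (2 * p)) - (1 - X ^ 2) ^ m := by
    rw [expand17, ← Finset.sum_sub_distrib]
    refine Finset.sum_congr rfl fun p _ => ?_
    rw [map_sub, sub_mul]
  have e1 : ∑ p ∈ Finset.range (m + 1), C (χ p) * X ^ (2 * p)
      = ∑ j ∈ Finset.range (m+1), C (f j) * X^(2*j) * (1 - X^2)^(m-j) := by
    rw [← aux17]
    refine Finset.sum_congr rfl fun p _ => ?_
    rw [hχ, map_sum]
  have e2 : ∑ k ∈ Finset.range (n + 1), C (h k) * X ^ (2 * k)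
      = ∑ i ∈ Finset.range (n+1), C (f i) * X^(2*i) * (1 - X^2)^(n-i) := by
    rw [← aux17]
    refine Finset.sum_congr rfl fun k _ => ?_
    rw [hh, map_sum]
    refine congrArg (· * X^(2*k)) (Finset.sum_congr rfl fun i _ => ?_)
    congr 1
    ring
  rw [e0, e1]
  congr 1
  rw [e2, Finset.mul_sum]
  rw [← Finset.sum_subset (Finset.range_subset_range.2 (Nat.succ_le_succ hnm))
      (fun j _ hj => by simp [hf0 j (by simpa using hj)])]
  refine Finset.sum_congr rfl fun i hi => ?_
  simp only [Finset.mem_range] at hi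
  rw [show m - i = (m - n) + (n - i) from by omega, pow_add]
  ring
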